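/- Let (P,≤) be a poset and A, B, C an extendible triple. Then the rotation R_{A,C} equals the composition of two cuts: R_{A,C}(P,≤) = C_{A∪B}(C_A(P,≤)), where C_X denotes the cut R_{X,∅}. -/

import Mathlib

universe u

variable {P : Type u}

/-- `A` is a downset (downward closed set) w.r.t. the relation `le`. -/
def IsDownset (le : P → P → Prop) (A : Set P) : Prop :=
  ∀ ⦃x⦄, x ∈ A → ∀ ⦃y⦄, le y x → y ∈ A

/-- `C` is an upset (upward closed set) w.r.t. the relation `le`. -/
def IsUpset (le : P → P → Prop) (C : Set P) : Prop :=
  ∀ ⦃x⦄, x ∈ C → ∀ ⦃y⦄, le x y → y ∈ C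

/-- `x` and `y` are incomparable w.r.t. `le`. -/
def Incomp (le : P → P → Prop) (x y : P) : Prop := ¬ le x y ∧ ¬ le y x

/-- Strictly less: `le x y` and `x ≠ y`. -/
def SLT (le : P → P → Prop) (x y : P) : Prop := le x y ∧ x ≠ y

/-- The conditions under which the rotation `R_{A,C}` is defined:
`A`, `C` disjoint, `A` a downset, `C` an upset, and every element of `A`
strictly below every element of `C`. -/
def RotOK (le : P → P → Prop) (A C : Set P) : Prop :=
  Disjoint A C ∧ IsDownset le A ∧ IsUpset le C ∧
    ∀ a ∈ A, ∀ c ∈ C, le a c ∧ a ≠ c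

/-- The rotation `R_{A,C}` of the relation `le`; the middle block `B` is the
complement of `A ∪ C`. -/
def Rot (le : P → P → Prop) (A C : Set P) : P → P → Prop := fun x y =>
  (((x ∈ A ∧ y ∈ A) ∨ (x ∉ A ∧ x ∉ C ∧ y ∉ A ∧ y ∉ C) ∨ (x ∈ C ∧ y ∈ C)) ∧ le x y) ∨
  (x ∉ A ∧ x ∉ C ∧ y ∈ A ∧ Incomp le x y) ∨
  (x ∈ C ∧ y ∈ A) ∨
  (x ∈ C ∧ y ∉ A ∧ y ∉ C ∧ Incomp le x y)

/-- One rotation step between two relations on the same domain. -/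
def RotStep (le le' : P → P → Prop) : Prop :=
  ∃ A C, RotOK le A C ∧ le' = Rot le A C

/-- Rotation-equivalence: the reflexive-transitive closure of rotation steps. -/
def RotEquiv (le le' : P → P → Prop) : Prop :=
  Relation.ReflTransGen RotStep le le'

/-- Restriction of a relation to a subset (as a relation on the subtype). -/
def restrictRel (le : P → P → Prop) (S : Set P) : S → S → Prop :=
  fun x y => le x.1 y.1

/-- The set of maximal elements of a relation. -/
def maxSet (le : P → P → Prop) : Set P := {x | ∀ y, le x y → y = x}

/-- The rotation class `O₂` of a three element poset `{a,b,c}`: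
chains `a<b<c`, `b<c<a`, `c<a<b`, and the posets with single comparability
`a<b`, `b<c`, `c<a`. -/
def O2rel (le : P → P → Prop) (a b c : P) : Prop :=
  (SLT le a b ∧ SLT le b c) ∨ (SLT le b c ∧ SLT le c a) ∨ (SLT le c a ∧ SLT le a b) ∨
  (SLT le a b ∧ Incomp le a c ∧ Incomp le b c) ∨
  (SLT le b c ∧ Incomp le b a ∧ Incomp le c a) ∨
  (SLT le c a ∧ Incomp le c b ∧ Incomp le a b)

/-- The rotation class `O₃`: the dual of `O₂`. -/
def O3rel (le : P → P → Prop) (a b c : P) : Prop := O2rel le c b a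

/-- The rotation class `O₁`: the antichain together with the `V` and `Λ` shaped
three element posets. -/
def O1rel (le : P → P → Prop) (a b c : P) : Prop :=
  (Incomp le a b ∧ Incomp le b c ∧ Incomp le a c) ∨
  (SLT le a b ∧ SLT le a c ∧ Incomp le b c) ∨
  (SLT le b a ∧ SLT le b c ∧ Incomp le a c) ∨
  (SLT le c a ∧ SLT le c b ∧ Incomp le a b) ∨
  (SLT le b a ∧ SLT le c a ∧ Incomp le b c) ∨
  (SLT le a b ∧ SLT le c b ∧ Incomp le a c) ∨
  (SLT le a c ∧ SLT le b c ∧ Incomp le a b)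

/-- The extension property (EXT) characterizing the random poset: every
one-point extension of a finite subposet is realized by some element. -/
def ExtProp (le : P → P → Prop) : Prop :=
  ∀ Q : Set P, Q.Finite → ∀ D U : Set P, D ⊆ Q → U ⊆ Q → Disjoint D U →
    (∀ x ∈ Q, ∀ d ∈ D, le x d → x ∈ D) →
    (∀ x ∈ Q, ∀ u ∈ U, le u x → x ∈ U) →
    (∀ d ∈ D, ∀ u ∈ U, le d u ∧ d ≠ u) →
    ∃ s, s ∉ Q ∧ (∀ d ∈ D, le d s ∧ d ≠ s) ∧ (∀ u ∈ U, le s u ∧ s ≠ u) ∧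
      ∀ x ∈ Q, x ∉ D → x ∉ U → Incomp le s x



lemma rot_empty_iff (le : P → P → Prop) (A : Set P) (x y : P) :
    Rot le A ∅ x y ↔
      (x ∈ A ∧ y ∈ A ∧ le x y) ∨ (x ∉ A ∧ y ∉ A ∧ le x y) ∨
        (x ∉ A ∧ y ∈ A ∧ Incomp le x y) := by
  simp only [Rot, Set.mem_empty_iff_false, not_false_iff, and_true, true_and, false_and,
    and_false, or_false, false_or]
  tauto

set_option maxHeartbeats 4000000 in
theorem stmt3 (le : P → P → Prop) [IsPartialOrder P le]
    (A C B : Set P) (hB : B = (A ∪ C)ᶜ) (h : RotOK le A C) :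
    IsDownset (Rot le A ∅) (A ∪ B) ∧
    Rot le A C = Rot (Rot le A ∅) (A ∪ B) ∅ := by
  obtain ⟨hAC, hA, hC, hac⟩ := h
  have hdisj : ∀ x, x ∈ A → x ∉ C := fun x hx => Set.disjoint_left.mp hAC hx
  have hanti : ∀ a b : P, le a b → le b a → a = b := fun a b => Std.Antisymm.antisymm a b
  have hdown : IsDownset (Rot le A ∅) (A ∪ B) := by
    intro x hx y hyx
    subst hB
    rw [rot_empty_iff] at hyx
    simp only [Set.mem_union, Set.mem_compl_iff, Set.mem_union] at hx ⊢
    rcases hyx with ⟨hyA, _, _⟩ | ⟨hyA2, hxA2, hle⟩ | ⟨hyA2, hxA2, hinc⟩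
    · exact Or.inl hyA
    · rcases hx with hx | hx
      · exact absurd hx hxA2
      · refine Or.inr fun h' => ?_
        rcases h' with h' | h'
        · exact hyA2 h'
        · exact hx (Or.inr (hC h' hle))
    · refine Or.inr fun h' => ?_
      rcases h' with h' | h'
      · exact hyA2 h'
      · exact hinc.2 (hac x hxA2 y h').1
  refine ⟨hdown, ?_⟩
  funext x y
  apply propext
  have k1 : x ∈ A → y ∈ C → le x y := fun ha hc => (hac x ha y hc).1
  have k2 : x ∈ A → y ∈ C → ¬ le y x := fun ha hc hle =>
    (hac x ha y hc).2 (hanti x y (hac x ha y hc).1 hle)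
  have k3 : y ∈ A → x ∈ C → le y x := fun ha hc => (hac y ha x hc).1
  have k4 : y ∈ A → x ∈ C → ¬ le x y := fun ha hc hle =>
    (hac y ha x hc).2 (hanti y x (hac y ha x hc).1 hle)
  have d1 : x ∈ A → le y x → y ∈ A := fun ha hle => hA ha hle
  have d2 : y ∈ A → le x y → x ∈ A := fun ha hle => hA ha hle
  have u1 : x ∈ C → le x y → y ∈ C := fun hc hle => hC hc hle
  have u2 : y ∈ C → le y x → x ∈ C := fun hc hle => hC hc hle
  have e1 : x ∈ A → x ∉ C := hdisj x
  have e2 : y ∈ A → y ∉ C := hdisj y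
  subst hB
  simp only [Rot, Incomp, Set.mem_empty_iff_false, Set.mem_union, Set.mem_compl_iff,
    not_false_iff, and_true, true_and, false_and, and_false, or_false, false_or, not_or,
    not_not, not_and]
  by_cases hxA : x ∈ A <;> by_cases hyA : y ∈ A <;>
    by_cases hxC : x ∈ C <;> by_cases hyC : y ∈ C
  all_goals (
    simp only [hxA, hyA, hxC, hyC, not_true, not_false_iff, true_and, and_true, false_and,
      and_false, or_false, false_or, true_or, or_true, true_implies, false_implies,
      not_true_eq_false, not_false_eq_true, implies_true]
    try tauto)
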